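/- Consider the transition probability bounds of Theorem 1: for rectangles Q_j = [a^j, b^j], Q_ℓ = [a^ℓ, b^ℓ] and the system x⁺ = F(x) + w with F mixed monotone with decomposition g and w having independent, symmetric, unimodal component densities f_{w_i} with modes c_i, define Ť(Q_j, Q_ℓ) = ∏_i ∫_{a^ℓ_i}^{b^ℓ_i} f_{w_i}(x − s^{j→ℓ}_{i,min}) dx and T̂(Q_j, Q_ℓ) = ∏_i ∫_{a^ℓ_i}^{b^ℓ_i} f_{w_i}(x − s^{j→ℓ}_{i,max}) dx, where s^{j→ℓ}_{i,max} is the projection of s^ℓ_{i,max} = (a^ℓ_i + b^ℓ_i)/2 − c_i onto [g_i(a^j,b^j), g_i(b^j,a^j)] and s^{j→ℓ}_{i,min} is the endpoint of that interval farthest from s^ℓ_{i,max}. Then Ť(Q_j,Q_ℓ) ≤ inf_{x∈Q_j} Pr(F(x)+w ∈ Q_ℓ) and sup_{x∈Q_j} Pr(F(x)+w ∈ Q_ℓ) ≤ T̂(Q_j,Q_ℓ). -/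

import Mathlib

open MeasureTheory

/-- Projection of the unconstrained maximizing shift `s` onto the interval `[lo, hi]`. -/
noncomputable def projShift (lo hi s : ℝ) : ℝ :=
  if s < lo then lo else if hi < s then hi else s

/-- Endpoint of `[lo, hi]` farthest from the unconstrained maximizing shift `s`. -/
noncomputable def farShift (lo hi s : ℝ) : ℝ :=
  if (lo + hi) / 2 ≤ s then lo else hi

lemma oneDim (f : ℝ → ℝ) (c : ℝ)
    (hdiff : Differentiable ℝ f)
    (hsym : ∀ x, f (c - x) = f (c + x))
    (hup : ∀ x < c, 0 ≤ deriv f x) (hdown : ∀ x > c, deriv f x ≤ 0)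
    (al bl : ℝ) (hlb : al ≤ bl) (lo hi : ℝ) (hlohi : lo ≤ hi)
    (v : ℝ) (hv1 : lo ≤ v) (hv2 : v ≤ hi) :
    (∫ t in al..bl, f (t - farShift lo hi ((al+bl)/2 - c))) ≤ (∫ t in al..bl, f (t - v)) ∧
    (∫ t in al..bl, f (t - v)) ≤ ∫ t in al..bl, f (t - projShift lo hi ((al+bl)/2 - c)) := by
  have hcont : Continuous f := hdiff.continuous
  -- monotone/antitone of f around c
  have fMono : MonotoneOn f (Set.Iic c) := by
    apply monotoneOn_of_deriv_nonneg (convex_Iic c) hcont.continuousOn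
    · intro x hx; exact (hdiff x).differentiableWithinAt
    · intro x hx
      rw [interior_Iic] at hx
      exact hup x hx
  have fAnti : AntitoneOn f (Set.Ici c) := by
    apply antitoneOn_of_deriv_nonpos (convex_Ici c) hcont.continuousOn
    · intro x hx; exact (hdiff x).differentiableWithinAt
    · intro x hx
      rw [interior_Ici] at hx
      exact hdown x hx
  have f_ge : ∀ u vv, u ≤ vv → c ≤ (u + vv)/2 → f vv ≤ f u := by
    intro u vv huv hc
    rcases le_or_gt c u with h | h
    · exact fAnti (Set.mem_Ici.2 h) (Set.mem_Ici.2 (le_trans h huv)) huv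
    · have e : f u = f (2*c - u) := by
        have := hsym (c - u)
        calc f u = f (c - (c - u)) := by congr 1; ring
          _ = f (c + (c - u)) := this
          _ = f (2*c - u) := by congr 1; ring
      rw [e]
      exact fAnti (Set.mem_Ici.2 (by linarith)) (Set.mem_Ici.2 (by linarith : c ≤ vv)) (by linarith)
  have f_le : ∀ u vv, u ≤ vv → (u + vv)/2 ≤ c → f u ≤ f vv := by
    intro u vv huv hc
    rcases le_or_gt vv c with h | h
    · exact fMono (Set.mem_Iic.2 (le_trans huv h)) (Set.mem_Iic.2 h) huv
    · have e : f vv = f (2*c - vv) := by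
        have := hsym (vv - c)
        calc f vv = f (c + (vv - c)) := by congr 1; ring
          _ = f (c - (vv - c)) := this.symm
          _ = f (2*c - vv) := by congr 1; ring
      rw [e]
      exact fMono (Set.mem_Iic.2 (by linarith : u ≤ c)) (Set.mem_Iic.2 (by linarith)) (by linarith)
  -- h and its derivative
  set h : ℝ → ℝ := fun s => ∫ t in al..bl, f (t - s) with hh_def
  have hii : ∀ a b : ℝ, IntervalIntegrable f volume a b := fun a b =>
    hcont.intervalIntegrable a b
  set G : ℝ → ℝ := fun x => ∫ t in (0:ℝ)..x, f t with hG_def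
  have Gd : ∀ x, HasDerivAt G (f x) x := fun x =>
    intervalIntegral.integral_hasDerivAt_right (hii 0 x)
      (hcont.stronglyMeasurableAtFilter _ _) hcont.continuousAt
  have heq : ∀ s, h s = G (bl - s) - G (al - s) := by
    intro s
    have h1 : h s = ∫ t in (al - s)..(bl - s), f t := by
      rw [hh_def]; exact intervalIntegral.integral_comp_sub_right f s
    have h2 := intervalIntegral.integral_add_adjacent_intervals (hii 0 (al - s)) (hii (al-s) (bl-s))
    rw [h1]; simp only [hG_def]; linarith
  have hd : ∀ s, HasDerivAt h (f (al - s) - f (bl - s)) s := by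
    intro s
    have d1 : HasDerivAt (fun s : ℝ => bl - s) (-1) s := by
      simpa using (hasDerivAt_id s).const_sub bl
    have d2 : HasDerivAt (fun s : ℝ => al - s) (-1) s := by
      simpa using (hasDerivAt_id s).const_sub al
    have e1 : HasDerivAt (fun s => G (bl - s)) (f (bl - s) * (-1)) s := (Gd (bl - s)).comp s d1
    have e2 : HasDerivAt (fun s => G (al - s)) (f (al - s) * (-1)) s := (Gd (al - s)).comp s d2
    have := e1.sub e2
    have e3 : (fun s => G (bl - s) - G (al - s)) = h := by funext s; rw [heq s]
    rw [(by exact e3 : ((fun s => G (bl - s)) - fun s => G (al - s)) = h)] at this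
    rw [show f (al - s) - f (bl - s) = f (bl - s) * -1 - f (al - s) * -1 by ring]; exact this
  have hMono : MonotoneOn h (Set.Iic ((al + bl)/2 - c)) := by
    apply monotoneOn_of_deriv_nonneg (convex_Iic ((al + bl)/2 - c))
      (fun x _ => ((hd x).differentiableAt.continuousAt).continuousWithinAt)
    · intro x hx; exact (hd x).differentiableAt.differentiableWithinAt
    · intro x hx
      rw [interior_Iic] at hx
      rw [(hd x).deriv]
      have : f (bl - x) ≤ f (al - x) := f_ge (al - x) (bl - x) (by linarith)
        (by simp only [Set.mem_Iio, Set.mem_Ioi] at hx; linarith)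
      linarith
  have hAnti : AntitoneOn h (Set.Ici ((al + bl)/2 - c)) := by
    apply antitoneOn_of_deriv_nonpos (convex_Ici ((al + bl)/2 - c))
      (fun x _ => ((hd x).differentiableAt.continuousAt).continuousWithinAt)
    · intro x hx; exact (hd x).differentiableAt.differentiableWithinAt
    · intro x hx
      rw [interior_Ici] at hx
      rw [(hd x).deriv]
      have : f (al - x) ≤ f (bl - x) := f_le (al - x) (bl - x) (by linarith)
        (by simp only [Set.mem_Iio, Set.mem_Ioi] at hx; linarith)
      linarith
  have hsymm : ∀ s, h (2*((al + bl)/2 - c) - s) = h s := by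
    intro s
    have e1 : ∀ t, f (t - (2*((al + bl)/2 - c) - s)) = f ((al + bl - s) - t) := by
      intro t
      calc f (t - (2*((al + bl)/2 - c) - s)) = f (c - ((al + bl) - c - s - t)) := by
            congr 1; ring
        _ = f (c + ((al + bl) - c - s - t)) := hsym _
        _ = f ((al + bl - s) - t) := by congr 1; ring
    show (∫ t in al..bl, f (t - (2*((al + bl)/2 - c) - s))) = h s
    rw [intervalIntegral.integral_congr (g := fun t => f ((al + bl - s) - t)) (fun t _ => e1 t),
      intervalIntegral.integral_comp_sub_left f (al + bl - s)]
    have h1 : h s = ∫ t in (al - s)..(bl - s), f t := intervalIntegral.integral_comp_sub_right f s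
    rw [h1]
    congr 1 <;> ring
  constructor
  · -- lower bound
    show h (farShift lo hi ((al + bl)/2 - c)) ≤ h v
    unfold farShift
    split_ifs with h1
    · rcases le_total v ((al + bl)/2 - c) with hc | hc
      · exact hMono (Set.mem_Iic.2 (by linarith : lo ≤ ((al + bl)/2 - c))) (Set.mem_Iic.2 hc) hv1
      · have hw : h (2*((al + bl)/2 - c) - v) = h v := hsymm v
        rw [← hw]
        exact hMono (Set.mem_Iic.2 (by linarith : lo ≤ ((al + bl)/2 - c))) (Set.mem_Iic.2 (by linarith)) (by linarith)
    · push_neg at h1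
      rcases le_total ((al + bl)/2 - c) v with hc | hc
      · exact hAnti (Set.mem_Ici.2 hc) (by simp only [Set.mem_Ici]; linarith) hv2
      · have hw : h (2*((al + bl)/2 - c) - v) = h v := hsymm v
        rw [← hw]
        exact hAnti (by simp only [Set.mem_Ici]; linarith) (by simp only [Set.mem_Ici]; linarith)
          (by linarith)
  · -- upper bound
    show h v ≤ h (projShift lo hi ((al + bl)/2 - c))
    unfold projShift
    split_ifs with h1 h2
    · exact hAnti (by simp only [Set.mem_Ici]; linarith) (by simp only [Set.mem_Ici]; linarith) hv1
    · exact hMono (Set.mem_Iic.2 (by linarith)) (Set.mem_Iic.2 (le_of_lt h2)) hv2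
    · push_neg at h1 h2
      rcases le_total v ((al + bl)/2 - c) with hc | hc
      · exact hMono (Set.mem_Iic.2 hc) (Set.mem_Iic.2 le_rfl) hc
      · exact hAnti (Set.mem_Ici.2 le_rfl) (Set.mem_Ici.2 hc) hc

/-- Theorem 1 transition bounds. For rectangles `Q_j = [aj,bj]`,
`Q_ℓ = [al,bl]`, mixed monotone `F` with decomposition `g`, and independent symmetric
unimodal component densities `f i` with modes `c i`,
`Ť = ∏ i ∫ f i (t - s_min) ≤ inf_{x ∈ Q_j} Pr(F x + w ∈ Q_ℓ)` and
`sup_{x ∈ Q_j} Pr(F x + w ∈ Q_ℓ) ≤ T̂ = ∏ i ∫ f i (t - s_max)`, where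
`Pr(F x + w ∈ Q_ℓ) = ∏ i ∫ t in al i..bl i, f i (t - F x i)`. -/
theorem stmt_18 {n : ℕ}
    (F : (Fin n → ℝ) → (Fin n → ℝ))
    (g : (Fin n → ℝ) → (Fin n → ℝ) → (Fin n → ℝ))
    (hdec : ∀ x, F x = g x x)
    (hmono1 : ∀ x₁ x₂ y, x₁ ≤ x₂ → g x₁ y ≤ g x₂ y)
    (hmono2 : ∀ x y₁ y₂, y₁ ≤ y₂ → g x y₂ ≤ g x y₁)
    (f : Fin n → ℝ → ℝ) (c : Fin n → ℝ)
    (hdiff : ∀ i, Differentiable ℝ (f i))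
    (hnonneg : ∀ i x, 0 ≤ f i x)
    (hint : ∀ i, Integrable (f i))
    (hone : ∀ i, ∫ x, f i x = 1)
    (hsym : ∀ i x, f i (c i - x) = f i (c i + x))
    (hup : ∀ i, ∀ x < c i, 0 ≤ deriv (f i) x)
    (hdown : ∀ i, ∀ x > c i, deriv (f i) x ≤ 0)
    (aj bj al bl : Fin n → ℝ) (hj : aj ≤ bj) (hl : al ≤ bl) :
    (∏ i, ∫ t in (al i)..(bl i),
        f i (t - farShift (g aj bj i) (g bj aj i) ((al i + bl i) / 2 - c i))) ≤
      sInf ((fun x => ∏ i, ∫ t in (al i)..(bl i), f i (t - F x i)) ''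
        Set.Icc aj bj) ∧
    sSup ((fun x => ∏ i, ∫ t in (al i)..(bl i), f i (t - F x i)) '' Set.Icc aj bj) ≤
      ∏ i, ∫ t in (al i)..(bl i),
        f i (t - projShift (g aj bj i) (g bj aj i) ((al i + bl i) / 2 - c i)) := by
  have hIcc : aj ∈ Set.Icc aj bj := ⟨le_rfl, hj⟩
  have hF : ∀ x ∈ Set.Icc aj bj, ∀ i, g aj bj i ≤ F x i ∧ F x i ≤ g bj aj i := by
    intro x hx i
    rw [hdec]
    exact ⟨le_trans (hmono1 aj x bj hx.1 i) (hmono2 x x bj hx.2 i),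
      le_trans (hmono1 x bj x hx.2 i) (hmono2 bj aj x hx.1 i)⟩
  have hlohi : ∀ i, g aj bj i ≤ g bj aj i := fun i =>
    le_trans (hF aj hIcc i).1 (hF aj hIcc i).2
  have key := fun x (hx : x ∈ Set.Icc aj bj) (i : Fin n) =>
    oneDim (f i) (c i) (hdiff i) (hsym i) (hup i) (hdown i) (al i) (bl i) (hl i)
      (g aj bj i) (g bj aj i) (hlohi i) (F x i) (hF x hx i).1 (hF x hx i).2
  have hnn : ∀ (s : ℝ) (i : Fin n), 0 ≤ ∫ t in (al i)..(bl i), f i (t - s) :=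
    fun s i => intervalIntegral.integral_nonneg (hl i) (fun t _ => hnonneg i _)
  have hlow : ∀ x ∈ Set.Icc aj bj,
      (∏ i, ∫ t in (al i)..(bl i),
        f i (t - farShift (g aj bj i) (g bj aj i) ((al i + bl i) / 2 - c i))) ≤
      ∏ i, ∫ t in (al i)..(bl i), f i (t - F x i) := fun x hx =>
    Finset.prod_le_prod (fun i _ => hnn _ i) (fun i _ => (key x hx i).1)
  have hhigh : ∀ x ∈ Set.Icc aj bj,
      (∏ i, ∫ t in (al i)..(bl i), f i (t - F x i)) ≤
      ∏ i, ∫ t in (al i)..(bl i),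
        f i (t - projShift (g aj bj i) (g bj aj i) ((al i + bl i) / 2 - c i)) := fun x hx =>
    Finset.prod_le_prod (fun i _ => hnn _ i) (fun i _ => (key x hx i).2)
  refine ⟨le_csInf ⟨_, Set.mem_image_of_mem _ hIcc⟩ ?_, csSup_le ⟨_, Set.mem_image_of_mem _ hIcc⟩ ?_⟩
  · rintro b ⟨x, hx, rfl⟩; exact hlow x hx
  · rintro b ⟨x, hx, rfl⟩; exact hhigh x hx
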